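/- arXiv:2101.12673 — 2 statements merged into one kernel-verified Lean document; each statement's English description precedes it below -/
import Mathlib

section
/- Every chordal bipartite graph is weakly chordal, i.e., if G is a bipartite graph in which every cycle of length at least 6 has a chord, then G contains no induced cycle of length at least 5 and no induced complement of a cycle of length at least 5. -/
open SimpleGraph

variable {V : Type*}

/-- A walk is chordless if every `G`-edge between vertices on the walk is an edge of the walk. -/
def SimpleGraph.Walk.Chordless {V : Type*} {G : SimpleGraph V} {x y : V} (p : G.Walk x y) : Prop :=
  ∀ u v, u ∈ p.support → v ∈ p.support → G.Adj u v → p.toSubgraph.Adj u v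

/-- A two-pair: non-adjacent vertices such that every induced (chordless) path
between them has exactly two edges. -/
def SimpleGraph.IsTwoPair (G : SimpleGraph V) (x y : V) : Prop :=
  x ≠ y ∧ ¬ G.Adj x y ∧ ∀ p : G.Walk x y, p.IsPath → p.Chordless → p.length = 2

/-- `G` has a hole: an induced (chordless) cycle of length at least 5. -/
def SimpleGraph.HasHole (G : SimpleGraph V) : Prop :=
  ∃ (x : V) (p : G.Walk x x), p.IsCycle ∧ 5 ≤ p.length ∧ p.Chordless

/-- Weakly chordal graphs: hole-free and antihole-free. -/
def SimpleGraph.WeaklyChordal (G : SimpleGraph V) : Prop :=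
  ¬ G.HasHole ∧ ¬ (Gᶜ).HasHole

/-- The contraction `G(x,y → z)` of a pair of vertices; the vertex `x` of the subtype
plays the role of the new vertex `z`, adjacent to exactly the vertices of `G - {x,y}`
adjacent to at least one of `x`, `y`. -/
def SimpleGraph.contractPair (G : SimpleGraph V) (x y : V) : SimpleGraph {v : V // v ≠ y} where
  Adj a b := a ≠ b ∧ (G.Adj a b ∨ (a.1 = x ∧ G.Adj y b.1) ∨ (b.1 = x ∧ G.Adj a.1 y))
  symm := ⟨by
    rintro a b ⟨hab, h | ⟨h1, h2⟩ | ⟨h1, h2⟩⟩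
    · exact ⟨hab.symm, Or.inl h.symm⟩
    · exact ⟨hab.symm, Or.inr (Or.inr ⟨h1, h2.symm⟩)⟩
    · exact ⟨hab.symm, Or.inr (Or.inl ⟨h1, h2.symm⟩)⟩⟩
  loopless := ⟨fun a => by rintro ⟨h, -⟩; exact h rfl⟩

/-- The square of a graph: join vertices at distance at most 2. -/
def SimpleGraph.square (G : SimpleGraph V) : SimpleGraph V where
  Adj a b := a ≠ b ∧ (G.Adj a b ∨ ∃ w, G.Adj a w ∧ G.Adj w b)
  symm := ⟨by
    rintro a b ⟨hab, h | ⟨w, h1, h2⟩⟩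
    · exact ⟨hab.symm, Or.inl h.symm⟩
    · exact ⟨hab.symm, Or.inr ⟨w, h2.symm, h1.symm⟩⟩⟩
  loopless := ⟨fun a => by rintro ⟨h, -⟩; exact h rfl⟩

/-- A graph is perfect if every induced subgraph has chromatic number equal to clique number. -/
def SimpleGraph.IsPerfect (G : SimpleGraph V) : Prop :=
  ∀ s : Set V, (G.induce s).chromaticNumber = ((G.induce s).cliqueNum : ℕ∞)

section MyAux
variable {G : SimpleGraph V}

lemma myWalk_parity (c : G.Coloring (ZMod 2)) {x y : V} (p : G.Walk x y) :
    c y = c x + p.length := by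
  induction p with
  | nil => simp
  | @cons u v' y h q ih =>
    have hne : c u ≠ c v' := c.valid h
    have key : ∀ a b : ZMod 2, a ≠ b → b = a + 1 := by decide
    rw [ih, key _ _ hne]
    push_cast [SimpleGraph.Walk.length_cons]
    ring

lemma myClosed_even (c : G.Coloring (ZMod 2)) {x : V} (p : G.Walk x x) :
    (p.length : ZMod 2) = 0 := by
  have := myWalk_parity c p
  exact (left_eq_add.mp this)

lemma mySupport_getElem {x y : V} (p : G.Walk x y) (i : ℕ) (h : i < p.support.length) :
    p.support[i] = p.getVert i := by
  induction p generalizing i with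
  | nil => simp_all [SimpleGraph.Walk.getVert]
  | @cons u v' y hadj q ih =>
    cases i with
    | zero => simp
    | succ n =>
      simp only [SimpleGraph.Walk.support_cons, List.getElem_cons_succ,
        SimpleGraph.Walk.getVert_cons_succ]
      exact ih n (by simpa [SimpleGraph.Walk.support_cons] using h)

lemma myCycle_getVert_inj {x : V} {p : G.Walk x x} (hp : p.IsCycle) {i j : ℕ}
    (hi : i ≤ p.length) (hj : j ≤ p.length) (h : p.getVert i = p.getVert j) :
    i = j ∨ (i = 0 ∧ j = p.length) ∨ (j = 0 ∧ i = p.length) := by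
  have hlen3 := hp.three_le_length
  have hlen := p.length_support
  have hnd := hp.support_nodup
  have htl : p.support.tail.length = p.length := by
    simp [List.length_tail, hlen]
  have htail : ∀ k (hk : k < p.support.tail.length), p.support.tail[k] = p.getVert (k + 1) := by
    intro k hk
    rw [List.getElem_tail, mySupport_getElem]
  have key : ∀ a b : ℕ, 1 ≤ a → a ≤ p.length → 1 ≤ b → b ≤ p.length →
      p.getVert a = p.getVert b → a = b := by
    intro a b ha1 ha2 hb1 hb2 hab
    have h1 : p.support.tail[a-1]'(by omega) = p.support.tail[b-1]'(by omega) := by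
      rw [htail _ (by omega), htail _ (by omega)]
      have : a - 1 + 1 = a := by omega
      rw [this]
      have : b - 1 + 1 = b := by omega
      rw [this, hab]
    have := (hnd.getElem_inj_iff).mp h1
    omega
  have hx0 : p.getVert 0 = p.getVert p.length := by
    rw [p.getVert_zero, p.getVert_length]
  rcases Nat.eq_zero_or_pos i with hi0 | hi0
  · rcases Nat.eq_zero_or_pos j with hj0 | hj0
    · left; omega
    · subst hi0
      right; left
      refine ⟨rfl, ?_⟩
      rw [hx0] at h
      exact (key _ _ (by omega) le_rfl hj0 hj h).symm
  · rcases Nat.eq_zero_or_pos j with hj0 | hj0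
    · subst hj0
      right; right
      refine ⟨rfl, ?_⟩
      rw [hx0] at h
      exact key _ _ hi0 hi (by omega) le_rfl h
    · left; exact key _ _ hi0 hi hj0 hj h

lemma myCycle_not_adj {x : V} {p : G.Walk x x} (hp : p.IsCycle) {i j : ℕ}
    (h2 : i + 2 ≤ j) (hj : j + 1 ≤ p.length) (hw : j + 2 ≤ i + p.length) :
    p.getVert i ≠ p.getVert j ∧ ¬ p.toSubgraph.Adj (p.getVert i) (p.getVert j) := by
  constructor
  · intro h
    rcases myCycle_getVert_inj hp (by omega) (by omega) h with h' | ⟨h1, h2'⟩ | ⟨h1, h2'⟩ <;> omega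
  · intro hadj
    rw [SimpleGraph.Walk.toSubgraph_adj_iff] at hadj
    obtain ⟨k, hk, hklt⟩ := hadj
    rw [Sym2.eq_iff] at hk
    rcases hk with ⟨ha, hb⟩ | ⟨ha, hb⟩
    · have hki : k = i := by
        rcases myCycle_getVert_inj hp (by omega) (by omega) ha with h' | ⟨h1, h2'⟩ | ⟨h1, h2'⟩ <;>
          omega
      subst hki
      rcases myCycle_getVert_inj hp (by omega) (by omega) hb with h' | ⟨h1, h2'⟩ | ⟨h1, h2'⟩ <;>
        omega
    · have hkj : k = j := by
        rcases myCycle_getVert_inj hp (by omega) (by omega) ha with h' | ⟨h1, h2'⟩ | ⟨h1, h2'⟩ <;>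
          omega
      subst hkj
      rcases myCycle_getVert_inj hp (by omega) (by omega) hb with h' | ⟨h1, h2'⟩ | ⟨h1, h2'⟩ <;>
        omega

lemma myAntihole_adj {x : V} {p : (Gᶜ).Walk x x} (hp : p.IsCycle) (hch : p.Chordless) {i j : ℕ}
    (h2 : i + 2 ≤ j) (hj : j + 1 ≤ p.length) (hw : j + 2 ≤ i + p.length) :
    G.Adj (p.getVert i) (p.getVert j) := by
  obtain ⟨hne, hnadj⟩ := myCycle_not_adj hp h2 hj hw
  by_contra hG
  refine hnadj (hch _ _ ?_ ?_ ((compl_adj G _ _).mpr ⟨hne, hG⟩))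
  · exact SimpleGraph.Walk.mem_support_iff_exists_getVert.mpr ⟨i, rfl, by omega⟩
  · exact SimpleGraph.Walk.mem_support_iff_exists_getVert.mpr ⟨j, rfl, by omega⟩

end MyAux

/-- Every chordal bipartite graph is weakly chordal. -/
theorem chordalBipartite_weaklyChordal (G : SimpleGraph V)
    (hbip : G.Colorable 2)
    (hchord : ∀ (x : V) (p : G.Walk x x), p.IsCycle → 6 ≤ p.length →
      ∃ u v, u ∈ p.support ∧ v ∈ p.support ∧ G.Adj u v ∧ ¬ p.toSubgraph.Adj u v) :
    G.WeaklyChordal := by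
  classical
  obtain ⟨c⟩ := hbip
  have c' : G.Coloring (ZMod 2) := c
  have h5 : ((5 : ℕ) : ZMod 2) ≠ 0 := by decide
  constructor
  · rintro ⟨x, p, hcyc, hlen, hchl⟩
    rcases le_or_gt 6 p.length with h6 | h6
    · obtain ⟨u, v, hu, hv, hadj, hnadj⟩ := hchord x p hcyc h6
      exact hnadj (hchl u v hu hv hadj)
    · have h5' : p.length = 5 := by omega
      have := myClosed_even c' p
      rw [h5'] at this
      exact h5 this
  · rintro ⟨x, p, hcyc, hlen, hchl⟩
    rcases le_or_gt 6 p.length with h6 | h6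
    · -- triangle on getVert 0, 2, 4
      have hab := myAntihole_adj hcyc hchl (i := 0) (j := 2) (by omega) (by omega) (by omega)
      have hac := myAntihole_adj hcyc hchl (i := 0) (j := 4) (by omega) (by omega) (by omega)
      have hbc := myAntihole_adj hcyc hchl (i := 2) (j := 4) (by omega) (by omega) (by omega)
      have hcf : G.CliqueFree 3 := Colorable.cliqueFree ⟨c⟩ (by omega)
      exact hcf {p.getVert 0, p.getVert 2, p.getVert 4}
        (is3Clique_triple_iff.mpr ⟨hab, hac, hbc⟩)
    · have h5' : p.length = 5 := by omega
      -- build closed 5-walk v0 v2 v4 v1 v3 v0 in G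
      have a02 := myAntihole_adj hcyc hchl (i := 0) (j := 2) (by omega) (by omega) (by omega)
      have a24 := myAntihole_adj hcyc hchl (i := 2) (j := 4) (by omega) (by omega) (by omega)
      have a14 := myAntihole_adj hcyc hchl (i := 1) (j := 4) (by omega) (by omega) (by omega)
      have a13 := myAntihole_adj hcyc hchl (i := 1) (j := 3) (by omega) (by omega) (by omega)
      have a03 := myAntihole_adj hcyc hchl (i := 0) (j := 3) (by omega) (by omega) (by omega)
      let w : G.Walk (p.getVert 0) (p.getVert 0) :=
        .cons a02 (.cons a24 (.cons a14.symm (.cons a13 (.cons a03.symm .nil))))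
      have hwl : w.length = 5 := rfl
      have := myClosed_even c' w
      rw [hwl] at this
      exact h5 this
end

section
/- Let {x,y} be a two-pair in a graph G, and let J = G(x,y → z) be the graph obtained by contracting x and y into a single vertex z adjacent to exactly the vertices of G − {x,y} adjacent to at least one of x, y. Then the chromatic number of G equals the chromatic number of J. -/
open SimpleGraph

variable {V : Type*}

private lemma walk_support_S {V : Type*} {G G' : SimpleGraph V} {S : V → Prop}
    (hG' : ∀ a b, G'.Adj a b → G.Adj a b ∧ S a ∧ S b) :
    ∀ {a b : V} (w : G'.Walk a b), S a → ∀ v ∈ w.support, S v := by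
  intro a b w
  induction w with
  | nil =>
    intro ha v hv
    simp only [Walk.support_nil, List.mem_singleton] at hv
    subst hv; exact ha
  | cons hadj p ih =>
    intro ha v hv
    rw [Walk.support_cons, List.mem_cons] at hv
    rcases hv with rfl | hv
    · exact ha
    · exact ih (hG' _ _ hadj).2.2 v hv

private lemma exists_walk_of_walk {V : Type*} {G G' : SimpleGraph V}
    (hle : ∀ a b, G'.Adj a b → G.Adj a b) {a b : V} (w : G'.Walk a b) :
    ∃ p : G.Walk a b, p.support = w.support := by
  induction w with
  | nil => exact ⟨.nil, rfl⟩
  | cons h p ih =>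
    obtain ⟨q, hq⟩ := ih
    exact ⟨.cons (hle _ _ h) q, by simp [hq]⟩

private lemma shortcut {V : Type*} {G : SimpleGraph V} {S : V → Prop} {x y a b : V}
    (r1 : G.Walk x a) (r2 : G.Walk a b) (r3 : G.Walk b y) (hab : G.Adj a b)
    (hS : ∀ v ∈ (r1.append (r2.append r3)).support, S v)
    (hmin : ∀ r : G.Walk x y, (∀ v ∈ r.support, S v) →
      (r1.append (r2.append r3)).length ≤ r.length) :
    s(a, b) ∈ r2.edges := by
  have hrS : ∀ v ∈ (r1.append (Walk.cons hab r3)).support, S v := by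
    intro v hv
    rw [Walk.mem_support_append_iff] at hv
    rcases hv with hv | hv
    · exact hS v (by rw [Walk.mem_support_append_iff]; exact Or.inl hv)
    · rw [Walk.support_cons, List.mem_cons] at hv
      rcases hv with rfl | hv
      · exact hS v (by
          rw [Walk.mem_support_append_iff]
          exact Or.inr (by rw [Walk.mem_support_append_iff]; exact Or.inl (Walk.start_mem_support _)))
      · exact hS v (by
          rw [Walk.mem_support_append_iff]
          exact Or.inr (by rw [Walk.mem_support_append_iff]; exact Or.inr hv))
  have hlen := hmin _ hrS
  simp only [Walk.length_append, Walk.length_cons] at hlen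
  have h0 : r2.length ≠ 0 := by
    intro h0
    apply hab.ne
    cases r2 with
    | nil => rfl
    | cons _ _ => simp at h0
  have h1 : r2.length = 1 := by omega
  cases r2 with
  | nil => simp at h1
  | cons h q =>
    cases q with
    | nil => simp
    | cons _ _ => simp [Walk.length_cons] at h1

private lemma exists_middle {V : Type*} {G : SimpleGraph V} {x y : V} (q : G.Walk x y)
    (h2 : q.length = 2) : ∃ w, G.Adj x w ∧ G.Adj w y ∧ w ∈ q.support := by
  cases q with
  | nil => simp at h2
  | cons h1 t =>
    cases t with
    | nil => simp at h2
    | cons hadj t2 =>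
      have ht2 : t2.length = 0 := by simp only [Walk.length_cons] at h2; omega
      cases t2 with
      | nil => exact ⟨_, h1, hadj, by simp⟩
      | cons _ _ => simp at ht2

private lemma contract_colorable {V : Type*} {G : SimpleGraph V} {x y : V} {n : ℕ}
    (c : V → Fin n) (hc : ∀ {u v}, G.Adj u v → c u ≠ c v) (hxy : c x = c y) :
    (G.contractPair x y).Colorable n := by
  refine ⟨Coloring.mk (fun a => c a.1) ?_⟩
  rintro a b (⟨hne, hab | ⟨h1, h2⟩ | ⟨h1, h2⟩⟩ : a ≠ b ∧ (G.Adj a.1 b.1 ∨ (a.1 = x ∧ G.Adj y b.1) ∨ (b.1 = x ∧ G.Adj a.1 y)))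
  · exact hc hab
  · rw [h1, hxy]; exact hc h2
  · rw [h1, hxy]; exact hc h2

private lemma kempe {V : Type*} {G : SimpleGraph V} {x y : V}
    (hnadj : ¬ G.Adj x y)
    (hpaths : ∀ p : G.Walk x y, p.IsPath → p.Chordless → p.length = 2)
    {n : ℕ} (hcol : G.Colorable n) : (G.contractPair x y).Colorable n := by
  classical
  obtain ⟨c⟩ := hcol
  by_cases hxy : c x = c y
  · exact contract_colorable c (fun h => c.valid h) hxy
  · set S : V → Prop := fun v => c v = c x ∨ c v = c y with hSdef
    let G' : SimpleGraph V :=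
      { Adj := fun u v => G.Adj u v ∧ S u ∧ S v
        symm := ⟨fun u v ⟨h1, h2, h3⟩ => ⟨h1.symm, h3, h2⟩⟩
        loopless := ⟨fun u ⟨h1, _⟩ => h1.ne rfl⟩ }
    have hG'S : ∀ a b, G'.Adj a b → G.Adj a b ∧ S a ∧ S b := fun _ _ h => h
    have hSx : S x := Or.inl rfl
    have hnr : ¬ G'.Reachable x y := by
      rintro ⟨w⟩
      obtain ⟨p0, hp0⟩ := exists_walk_of_walk (fun a b hh => (hG'S a b hh).1) w
      have hp0S : ∀ v ∈ p0.support, S v := by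
        rw [hp0]; exact walk_support_S hG'S w hSx
      have hex : ∃ m, ∃ p : G.Walk x y, (∀ v ∈ p.support, S v) ∧ p.length = m :=
        ⟨p0.length, p0, hp0S, rfl⟩
      obtain ⟨p, hpS, hpl⟩ := Nat.find_spec hex
      set q := p.bypass with hqdef
      have hqpath : q.IsPath := p.bypass_isPath
      have hqS : ∀ v ∈ q.support, S v := fun v hv => hpS v (p.support_bypass_subset hv)
      have hqmin : ∀ r : G.Walk x y, (∀ v ∈ r.support, S v) → q.length ≤ r.length := by
        intro r hr
        calc q.length ≤ p.length := p.length_bypass_le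
          _ = Nat.find hex := hpl
          _ ≤ r.length := Nat.find_min' hex ⟨r, hr, rfl⟩
      have hchord : q.Chordless := by
        intro u v hu hv huv
        have hv' : v ∈ (q.takeUntil u hu).support ∨ v ∈ (q.dropUntil u hu).support := by
          rw [← Walk.mem_support_append_iff, Walk.take_spec]
          exact hv
      -- key: a before b along q (b in dropUntil a) gives the edge
        have key : ∀ (a b : V) (hab : G.Adj a b) (ha : a ∈ q.support)
            (hb : b ∈ (q.dropUntil a ha).support), s(a, b) ∈ q.edges := by
          intro a b hab ha hb
          have hq : (q.takeUntil a ha).append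
              (((q.dropUntil a ha).takeUntil b hb).append ((q.dropUntil a ha).dropUntil b hb))
              = q := by
            rw [Walk.take_spec, Walk.take_spec]
          have hs := shortcut (S := S) (q.takeUntil a ha) ((q.dropUntil a ha).takeUntil b hb)
            ((q.dropUntil a ha).dropUntil b hb) hab ?_ ?_
          · rw [← hq, Walk.edges_append, Walk.edges_append, List.mem_append, List.mem_append]
            exact Or.inr (Or.inl hs)
          · rw [hq]; exact hqS
          · intro r hr; rw [hq]; exact hqmin r hr
        have key2 : ∀ (a b : V) (hab : G.Adj b a) (ha : a ∈ q.support)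
            (hb : b ∈ (q.takeUntil a ha).support), s(b, a) ∈ q.edges := by
          intro a b hab ha hb
          have hq : ((q.takeUntil a ha).takeUntil b hb).append
              (((q.takeUntil a ha).dropUntil b hb).append (q.dropUntil a ha)) = q := by
            rw [Walk.append_assoc, Walk.take_spec, Walk.take_spec]
          have hs := shortcut (S := S) ((q.takeUntil a ha).takeUntil b hb)
            ((q.takeUntil a ha).dropUntil b hb) (q.dropUntil a ha) hab ?_ ?_
          · rw [← hq, Walk.edges_append, Walk.edges_append, List.mem_append, List.mem_append]
            exact Or.inr (Or.inl hs)
          · rw [hq]; exact hqS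
          · intro r hr; rw [hq]; exact hqmin r hr
        rcases hv' with hvt | hvd
        · have e := key2 u v huv.symm hu hvt
          rw [Sym2.eq_swap] at e
          exact Subgraph.mem_edgeSet.mp ((Walk.mem_edges_toSubgraph q).mpr e)
        · have e := key u v huv hu hvd
          exact Subgraph.mem_edgeSet.mp ((Walk.mem_edges_toSubgraph q).mpr e)
      have h2 := hpaths q hqpath hchord
      obtain ⟨w', hxw, hwy, hwmem⟩ := exists_middle q h2
      rcases hqS w' hwmem with h1 | h1
      · exact c.valid hxw h1.symm
      · exact c.valid hwy h1
    have hreachS : ∀ v, G'.Reachable x v → S v := by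
      intro v hv
      obtain ⟨w⟩ := hv
      exact walk_support_S hG'S w hSx v w.end_mem_support
    let c' : V → Fin n := fun v => if G'.Reachable x v then Equiv.swap (c x) (c y) (c v) else c v
    have hc'valid : ∀ {u v}, G.Adj u v → c' u ≠ c' v := by
      intro u v huv
      by_cases hru : G'.Reachable x u <;> by_cases hrv : G'.Reachable x v
      · simp only [c', if_pos hru, if_pos hrv]
        exact fun he => c.valid huv (Equiv.injective _ he)
      · have hSu := hreachS u hru
        have hSv : ¬ S v := fun hSv =>
          hrv (hru.trans (SimpleGraph.Adj.reachable (G := G') ⟨huv, hSu, hSv⟩))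
        simp only [c', if_pos hru, if_neg hrv]
        intro he
        apply hSv
        rcases hSu with h1 | h1
        · rw [h1, Equiv.swap_apply_left] at he; exact Or.inr he.symm
        · rw [h1, Equiv.swap_apply_right] at he; exact Or.inl he.symm
      · have hSv := hreachS v hrv
        have hSu : ¬ S u := fun hSu =>
          hru (hrv.trans (SimpleGraph.Adj.reachable (G := G') ⟨huv.symm, hSv, hSu⟩))
        simp only [c', if_neg hru, if_pos hrv]
        intro he
        apply hSu
        rcases hSv with h1 | h1
        · rw [h1, Equiv.swap_apply_left] at he; exact Or.inr he
        · rw [h1, Equiv.swap_apply_right] at he; exact Or.inl he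
      · simp only [c', if_neg hru, if_neg hrv]
        exact c.valid huv
    have hc'xy : c' x = c' y := by
      simp only [c', if_pos (Reachable.refl x), if_neg hnr, Equiv.swap_apply_left]
    exact contract_colorable c' hc'valid hc'xy

private lemma easy_dir {V : Type*} {G : SimpleGraph V} {x y : V} (hne : x ≠ y)
    (hnadj : ¬ G.Adj x y) {n : ℕ} (hcol : (G.contractPair x y).Colorable n) :
    G.Colorable n := by
  classical
  obtain ⟨d⟩ := hcol
  refine ⟨Coloring.mk (fun v => if hv : v = y then d ⟨x, hne⟩ else d ⟨v, hv⟩) ?_⟩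
  intro u v huv
  by_cases hu : u = y <;> by_cases hv : v = y
  · exact absurd (hu.trans hv.symm) huv.ne
  · subst hu
    have hxv : x ≠ v := fun h => hnadj (h ▸ huv.symm)
    simp only [dif_pos rfl, dif_neg hv]
    exact d.valid (And.intro (by simp only [ne_eq, Subtype.mk.injEq]; exact hxv) (Or.inr (Or.inl ⟨rfl, huv⟩)))
  · subst hv
    have hxu : x ≠ u := fun h => hnadj (h ▸ huv)
    simp only [dif_pos rfl, dif_neg hu]
    exact d.valid (And.intro (by simp only [ne_eq, Subtype.mk.injEq]; exact Ne.symm hxu) (Or.inr (Or.inr ⟨rfl, huv⟩)))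
  · simp only [dif_neg hu, dif_neg hv]
    exact d.valid (And.intro (by simp only [ne_eq, Subtype.mk.injEq]; exact huv.ne) (Or.inl huv))

/-- contracting a two-pair preserves the chromatic number. -/
theorem chromaticNumber_contractPair (G : SimpleGraph V) (x y : V)
    (h : G.IsTwoPair x y) :
    G.chromaticNumber = (G.contractPair x y).chromaticNumber := by
  obtain ⟨hne, hnadj, hpaths⟩ := h
  apply le_antisymm
  · exact chromaticNumber_le_of_forall_imp (fun n hn => easy_dir hne hnadj hn)
  · exact chromaticNumber_le_of_forall_imp (fun n hn => kempe hnadj hpaths hn)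
end
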